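/- With the setup of the x-condition theorem, fix k ≥ 1 and let h_1,...,h_s be the products f_{i_1}···f_{i_k} whose corresponding monomials h_j^* = y_{i_1}···y_{i_k} are standard (i.e., not in in_<(J)), ordered so that h_1^* <' ... <' h_s^*. If the colon ideal I_j = (h_1,...,h_{j-1}) : h_j is proper, then in_<(I_j) is generated by exactly those variables x_i of S such that x_i h_j^* ∈ in_<(J). -/

import Mathlib

open MvPolynomial Finsupp

namespace Paper

variable (K : Type) [Field K] (n : ℕ)

/-- The polynomial ring `S = K[x_1,…,x_n]`. -/
abbrev S := MvPolynomial (Fin n) K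

/-- An ideal of `S` is generated by linear forms. -/
def GenByLinearForms (I : Ideal (S K n)) : Prop :=
  ∃ L : Set (S K n), (∀ f ∈ L, f ∈ homogeneousSubmodule (Fin n) K 1) ∧ I = Ideal.span L

variable {M : Type} [AddCommGroup M] [Module (S K n) M]

/-- `M` has linear quotients with respect to the system of generators `f`. -/
def HasLinearQuotientsWith {s : ℕ} (f : Fin s → M) : Prop :=
  (Submodule.span (S K n) (Set.range f) = ⊤) ∧
  ∀ j : Fin s,
    ((Submodule.span (S K n) (f '' {i | i < j})).colon (Submodule.span (S K n) {f j}) = ⊤ ∨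
      GenByLinearForms K n
        ((Submodule.span (S K n) (f '' {i | i < j})).colon (Submodule.span (S K n) {f j})))

/-- A minimal system of generators. -/
def IsMinimalGenSys {s : ℕ} (f : Fin s → M) : Prop :=
  Submodule.span (S K n) (Set.range f) = ⊤ ∧
  ∀ j, f j ∉ Submodule.span (S K n) (f '' {i | i ≠ j})

/-- The degree `t` component of the graded free module `⊕ S(-a i)`. -/
def freeComp {r : ℕ} (a : Fin r → ℕ) (t : ℕ) :
    Submodule K (Fin r →₀ S K n) where
  carrier := {v | ∀ i, v i ∈ homogeneousSubmodule (Fin n) K (t - a i) ∧ (t < a i → v i = 0)}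
  add_mem' := by
    intro v w hv hw i
    refine ⟨Submodule.add_mem _ (hv i).1 (hw i).1, fun h => ?_⟩
    simp [Finsupp.add_apply, (hv i).2 h, (hw i).2 h]
  zero_mem' := by
    intro i
    simp
  smul_mem' := by
    intro c v hv i
    refine ⟨Submodule.smul_mem _ c (hv i).1, fun h => ?_⟩
    simp [Finsupp.smul_apply, (hv i).2 h]

variable [Module K M] [IsScalarTower K (S K n) M]

/-- A graded free resolution of the graded module `M` with graded pieces `ℳ`. -/
structure GradedFreeResolution (ℳ : ℕ → Submodule K M) where
  rk : ℕ → ℕ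
  deg : (i : ℕ) → Fin (rk i) → ℕ
  d : (i : ℕ) → ((Fin (rk (i+1)) →₀ S K n) →ₗ[S K n] (Fin (rk i) →₀ S K n))
  aug : (Fin (rk 0) →₀ S K n) →ₗ[S K n] M
  aug_surj : Function.Surjective aug
  exact_aug : Function.Exact (d 0) aug
  exact : ∀ i, Function.Exact (d (i+1)) (d i)
  aug_graded : ∀ t, ∀ v ∈ freeComp K n (deg 0) t, aug v ∈ ℳ t
  d_graded : ∀ i t, ∀ v ∈ freeComp K n (deg (i+1)) t, d i v ∈ freeComp K n (deg i) t

/-- `M` (with grading `ℳ`) has a `d₀`-linear resolution. -/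
def HasLinearResolution (ℳ : ℕ → Submodule K M) (d₀ : ℕ) : Prop :=
  ∃ R : GradedFreeResolution K n ℳ, ∀ i k, R.deg i k = d₀ + i

/-- The submodule of `M` generated by the homogeneous elements of degree `j`. -/
noncomputable def degreeSubmodule (ℳ : ℕ → Submodule K M) (j : ℕ) : Submodule (S K n) M :=
  Submodule.span (S K n) (ℳ j : Set M)

/-- The grading induced on a submodule. -/
noncomputable def subGrading (ℳ : ℕ → Submodule K M) (N : Submodule (S K n) M) : ℕ → Submodule K N :=
  fun t => (ℳ t).comap ((N.subtype).restrictScalars K)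

/-- `M` is componentwise linear. -/
def ComponentwiseLinear (ℳ : ℕ → Submodule K M) : Prop :=
  ∀ j : ℕ, HasLinearResolution K n (subGrading K n ℳ (degreeSubmodule K n ℳ j)) j

/-- `ℳ` is a grading of the `S`-module `M`. -/
structure IsGrading (ℳ : ℕ → Submodule K M) : Prop where
  internal : DirectSum.IsInternal (fun i => ℳ i)
  smul_mem : ∀ i j : ℕ, ∀ p ∈ homogeneousSubmodule (Fin n) K i, ∀ x ∈ ℳ j, p • x ∈ ℳ (i + j)

/-- The graded maximal ideal of `S`. -/
noncomputable def maxIdeal : Ideal (S K n) := Ideal.span (Set.range X)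

/-- Minimality of a graded free resolution. -/
def IsMinimalRes {ℳ : ℕ → Submodule K M} (R : GradedFreeResolution K n ℳ) : Prop :=
  (∀ i, LinearMap.range (R.d i) ≤ (maxIdeal K n) • (⊤ : Submodule (S K n) (Fin (R.rk i) →₀ S K n))) ∧
  (LinearMap.ker R.aug ≤ (maxIdeal K n) • (⊤ : Submodule (S K n) (Fin (R.rk 0) →₀ S K n)))

/-- The graded Betti numbers read off from a resolution. -/
def betti {ℳ : ℕ → Submodule K M} (R : GradedFreeResolution K n ℳ) (i j : ℕ) : ℕ :=
  (Finset.univ.filter (fun k => R.deg i k = j)).card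

/-- `g` is an `M`-regular sequence of elements of the graded maximal ideal. -/
def IsRegularSeq {t : ℕ} (g : Fin t → S K n) : Prop :=
  (∀ i, g i ∈ maxIdeal K n) ∧
  (∀ i : Fin t, ∀ x : M,
      g i • x ∈ (Ideal.span (g '' {i' | i' < i})) • (⊤ : Submodule (S K n) M) →
        x ∈ (Ideal.span (g '' {i' | i' < i})) • (⊤ : Submodule (S K n) M)) ∧
  (Ideal.span (Set.range g)) • (⊤ : Submodule (S K n) M) ≠ ⊤

/-- The depth of `M` over `S`. -/
noncomputable def depth : ℕ∞ :=
  sSup ((fun t : ℕ => (t : ℕ∞)) ''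
    {t : ℕ | ∃ g : Fin t → S K n, IsRegularSeq K n (M := M) g})

end Paper

section MonOrd

open MvPolynomial

variable {K : Type} [Field K] {σ : Type*}

/-- The leading exponent of a polynomial with respect to a monomial order. -/
noncomputable def leadExp (m : MonomialOrder σ) (p : MvPolynomial σ K) : σ →₀ ℕ :=
  m.toSyn.symm (p.support.sup (fun c => m.toSyn c))

/-- The initial ideal of `J` with respect to a monomial order. -/
noncomputable def inIdeal (m : MonomialOrder σ) (J : Ideal (MvPolynomial σ K)) :
    Ideal (MvPolynomial σ K) :=
  Ideal.span ((fun p => monomial (leadExp m p) (1 : K)) '' {p | p ∈ J ∧ p ≠ 0})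

variable {A B : Type*}

/-- The restriction of an exponent vector to the first block of variables. -/
noncomputable def xPart (c : (A ⊕ B) →₀ ℕ) : A →₀ ℕ :=
  Finsupp.comapDomain Sum.inl c Sum.inl_injective.injOn

/-- The restriction of an exponent vector to the second block of variables. -/
noncomputable def yPart (c : (A ⊕ B) →₀ ℕ) : B →₀ ℕ :=
  Finsupp.comapDomain Sum.inr c Sum.inr_injective.injOn

/-- `ord` compares the `y`-part first (via `ordY`) and breaks ties using the `x`-part. -/
def ComparesYFirst (ord : MonomialOrder (A ⊕ B)) (ordY : MonomialOrder B)
    (ordX : MonomialOrder A) : Prop :=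
  ∀ c d : (A ⊕ B) →₀ ℕ,
    ord.toSyn c < ord.toSyn d ↔
      (ordY.toSyn (yPart c) < ordY.toSyn (yPart d) ∨
        (yPart c = yPart d ∧ ordX.toSyn (xPart c) < ordX.toSyn (xPart d)))

/-- The x-condition: the initial ideal of `J` is generated by monomials involving
at most one `x`-variable, with exponent at most 1. -/
def XCondition [Fintype A] (ord : MonomialOrder (A ⊕ B)) (J : Ideal (MvPolynomial (A ⊕ B) K)) :
    Prop :=
  ∃ D : Set ((A ⊕ B) →₀ ℕ), (∀ c ∈ D, (∑ i : A, c (Sum.inl i)) ≤ 1) ∧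
    inIdeal ord J = Ideal.span ((fun c => monomial c (1 : K)) '' D)

/-- Lexicographic comparison of exponent vectors, where `prio j i` means that variable `j`
has strictly higher priority than `i`. -/
def lexLt (prio : A → A → Prop) (a b : A →₀ ℕ) : Prop :=
  ∃ i, a i < b i ∧ ∀ j, prio j i → a j = b j

end MonOrd

namespace Paper

open MvPolynomial

variable (K : Type) [Field K] (n m : ℕ)

/-- The bigraded polynomial ring `T = K[x_1,…,x_n,y_1,…,y_m]`. -/
abbrev TT := MvPolynomial (Fin n ⊕ Fin m) K

/-- The inclusion `S → T` on the `x`-variables. -/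
noncomputable def ιS : S K n →ₐ[K] TT K n m := rename Sum.inl

noncomputable instance : Algebra (S K n) (TT K n m) := (ιS K n m).toRingHom.toAlgebra

/-- The monomial `y^c` in `T`. -/
noncomputable def ymon (c : Fin m →₀ ℕ) : TT K n m :=
  monomial (Finsupp.mapDomain Sum.inr c) (1 : K)

/-- Total `x`-degree of an exponent vector of `T`. -/
def xdegT (c : (Fin n ⊕ Fin m) →₀ ℕ) : ℕ := ∑ i : Fin n, c (Sum.inl i)

/-- Total `y`-degree of an exponent vector of `T`. -/
def ydegT (c : (Fin n ⊕ Fin m) →₀ ℕ) : ℕ := ∑ j : Fin m, c (Sum.inr j)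

/-- Degree of a `y`-exponent vector. -/
def ydeg (c : Fin m →₀ ℕ) : ℕ := ∑ j : Fin m, c j

/-- `J` is a bihomogeneous ideal of `T`, where `deg x_i = (1,0)` and `deg y_j = (dY j, 1)`. -/
def IsBihomogIdeal (dY : Fin m → ℕ) (J : Ideal (TT K n m)) : Prop :=
  ∃ Gs : Set (TT K n m),
    (∀ g ∈ Gs, ∃ a b : ℕ, ∀ c ∈ g.support,
        (xdegT n m c + ∑ j : Fin m, c (Sum.inr j) * dY j = a) ∧ ydegT n m c = b) ∧
    J = Ideal.span Gs

/-- `A_0 = S`: the polynomial subring `S` of `T` meets `J` trivially. -/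
def SInjectsModJ (J : Ideal (TT K n m)) : Prop :=
  ∀ p : S K n, ιS K n m p ∈ J → p = 0

/-- The `S`-module `A_k` (the `y`-degree-`k` component of `A = T/J`) has linear quotients:
there is a system of generators of `A_k` given by (classes of) monomials in the `y`'s of
degree `k` whose successive colon ideals are generated by linear forms. All computations
are performed in `T` modulo `J`. -/
def AkHasLinearQuotients (J : Ideal (TT K n m)) (k : ℕ) : Prop :=
  ∃ (s : ℕ) (H : Fin s → (Fin m →₀ ℕ)),
    (∀ j, ydeg m (H j) = k) ∧
    -- the monomials `y^{H j}` generate `A_k` over `S`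
    (∀ c : Fin m →₀ ℕ, ydeg m c = k →
      ymon K n m c ∈
        Submodule.span (S K n) (Set.range (fun j => ymon K n m (H j))) ⊔
          (J : Submodule (TT K n m) (TT K n m)).restrictScalars (S K n)) ∧
    -- successive colon ideals are `S` or generated by linear forms
    (∀ j : Fin s,
      ((Submodule.span (S K n) ((fun j' => ymon K n m (H j')) '' {i | i < j}) ⊔
          (J : Submodule (TT K n m) (TT K n m)).restrictScalars (S K n)).colon
        (Submodule.span (S K n) {ymon K n m (H j)}) = ⊤) ∨
      GenByLinearForms K n
        ((Submodule.span (S K n) ((fun j' => ymon K n m (H j')) '' {i | i < j}) ⊔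
            (J : Submodule (TT K n m) (TT K n m)).restrictScalars (S K n)).colon
          (Submodule.span (S K n) {ymon K n m (H j)})))

end Paper

section AuxLead

open MvPolynomial

variable {σ : Type*} {K : Type} [Field K] (mo : MonomialOrder σ)

lemma toSyn_leadExp_eq_sup (p : MvPolynomial σ K) :
    mo.toSyn (leadExp mo p) = p.support.sup (fun c => mo.toSyn c) := by
  rw [leadExp, AddEquiv.apply_symm_apply]

lemma leadExp_mem_support {p : MvPolynomial σ K} (hp : p ≠ 0) :
    leadExp mo p ∈ p.support := by
  obtain ⟨c, hc, hsup⟩ := Finset.exists_mem_eq_sup p.support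
    (Finset.nonempty_iff_ne_empty.mpr (fun h => hp (MvPolynomial.support_eq_empty.mp h)))
    (fun c => mo.toSyn c)
  rw [leadExp, hsup, AddEquiv.symm_apply_apply]
  exact hc

lemma coeff_leadExp_ne_zero {p : MvPolynomial σ K} (hp : p ≠ 0) :
    MvPolynomial.coeff (leadExp mo p) p ≠ 0 :=
  MvPolynomial.mem_support_iff.mp (leadExp_mem_support mo hp)

lemma le_toSyn_leadExp {p : MvPolynomial σ K} {c : σ →₀ ℕ} (hc : c ∈ p.support) :
    mo.toSyn c ≤ mo.toSyn (leadExp mo p) := by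
  rw [toSyn_leadExp_eq_sup]
  exact Finset.le_sup hc

lemma leadExp_eq_of {p : MvPolynomial σ K} {c : σ →₀ ℕ} (hc : MvPolynomial.coeff c p ≠ 0)
    (hmax : ∀ e ∈ p.support, mo.toSyn e ≤ mo.toSyn c) : leadExp mo p = c := by
  have h1 : mo.toSyn (leadExp mo p) ≤ mo.toSyn c := by
    rw [toSyn_leadExp_eq_sup]
    exact Finset.sup_le hmax
  have h2 : mo.toSyn c ≤ mo.toSyn (leadExp mo p) :=
    le_toSyn_leadExp mo (MvPolynomial.mem_support_iff.mpr hc)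
  exact mo.toSyn.injective (le_antisymm h1 h2)

lemma monomial_one_mem_inIdeal_iff {J : Ideal (MvPolynomial σ K)} {c : σ →₀ ℕ} :
    monomial c (1 : K) ∈ inIdeal mo J ↔ ∃ w, w ∈ J ∧ w ≠ 0 ∧ leadExp mo w ≤ c := by
  classical
  constructor
  · intro h
    rw [inIdeal, ← Set.image_image (fun s => monomial s (1 : K)) (leadExp mo)] at h
    have hc : c ∈ (monomial c (1 : K)).support := by
      rw [support_monomial, if_neg (one_ne_zero (α := K))]
      exact Finset.mem_singleton_self c
    obtain ⟨si, hsi, hle⟩ := mem_ideal_span_monomial_image.mp h c hc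
    obtain ⟨w, hw, rfl⟩ := hsi
    exact ⟨w, hw.1, hw.2, hle⟩
  · rintro ⟨w, hwJ, hw0, hle⟩
    have h1 : monomial c (1 : K) =
        monomial (c - leadExp mo w) (1 : K) * monomial (leadExp mo w) (1 : K) := by
      rw [monomial_mul, one_mul, tsub_add_cancel_of_le hle]
    rw [h1, inIdeal]
    exact Ideal.mul_mem_left _ _ (Ideal.subset_span ⟨w, ⟨hwJ, hw0⟩, rfl⟩)

lemma monomial_one_mem_inIdeal_mono {J : Ideal (MvPolynomial σ K)} {a c : σ →₀ ℕ} (h : a ≤ c)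
    (ha : monomial a (1 : K) ∈ inIdeal mo J) : monomial c (1 : K) ∈ inIdeal mo J := by
  obtain ⟨w, hwJ, hw0, hle⟩ := (monomial_one_mem_inIdeal_iff mo).mp ha
  exact (monomial_one_mem_inIdeal_iff mo).mpr ⟨w, hwJ, hw0, hle.trans h⟩

lemma monomial_one_mem_span_iff {D : Set (σ →₀ ℕ)} {c : σ →₀ ℕ} :
    monomial c (1 : K) ∈ Ideal.span ((fun c => monomial c (1 : K)) '' D) ↔ ∃ d ∈ D, d ≤ c := by
  classical
  constructor
  · intro h
    have hc : c ∈ (monomial c (1 : K)).support := by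
      rw [support_monomial, if_neg (one_ne_zero (α := K))]
      exact Finset.mem_singleton_self c
    exact mem_ideal_span_monomial_image.mp h c hc
  · rintro ⟨d, hd, hle⟩
    have h1 : monomial c (1 : K) = monomial (c - d) (1 : K) * monomial d (1 : K) := by
      rw [monomial_mul, one_mul, tsub_add_cancel_of_le hle]
    rw [h1]
    exact Ideal.mul_mem_left _ _ (Ideal.subset_span ⟨d, hd, rfl⟩)

/-- Division with remainder by an ideal: every polynomial is congruent mod `J` to one
all of whose monomials are standard, bounded above by monomials of `f`. -/
lemma exists_reduction (J : Ideal (MvPolynomial σ K)) (f : MvPolynomial σ K) :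
    ∃ r : MvPolynomial σ K, f - r ∈ J ∧
      (∀ c ∈ r.support, monomial c (1 : K) ∉ inIdeal mo J) ∧
      (∀ c ∈ r.support, ∃ c' ∈ f.support, mo.toSyn c ≤ mo.toSyn c') := by
  classical
  set B : MvPolynomial σ K → Finset (σ →₀ ℕ) :=
    fun f => f.support.filter (fun c => monomial c (1 : K) ∈ inIdeal mo J) with hB
  suffices h : ∀ d : mo.syn, ∀ f : MvPolynomial σ K, (B f).sup mo.toSyn ≤ d →
      ∃ r : MvPolynomial σ K, f - r ∈ J ∧
        (∀ c ∈ r.support, monomial c (1 : K) ∉ inIdeal mo J) ∧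
        (∀ c ∈ r.support, ∃ c' ∈ f.support, mo.toSyn c ≤ mo.toSyn c') by
    exact h _ f le_rfl
  intro d
  induction d using WellFoundedLT.induction with
  | _ d IH =>
    intro f hf
    by_cases hBf : B f = ∅
    · refine ⟨f, by simp, ?_, fun c hc => ⟨c, hc, le_rfl⟩⟩
      intro c hc hmem
      have : c ∈ B f := Finset.mem_filter.mpr ⟨hc, hmem⟩
      rw [hBf] at this
      exact absurd this (Finset.notMem_empty c)
    · obtain ⟨c, hcB, hsup⟩ := Finset.exists_mem_eq_sup (B f)
        (Finset.nonempty_iff_ne_empty.mpr hBf) mo.toSyn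
      have hcsupp : c ∈ f.support := (Finset.mem_filter.mp hcB).1
      have hcin : monomial c (1 : K) ∈ inIdeal mo J := (Finset.mem_filter.mp hcB).2
      obtain ⟨w, hwJ, hw0, hwle⟩ := (monomial_one_mem_inIdeal_iff mo).mp hcin
      have hlc0 : MvPolynomial.coeff (leadExp mo w) w ≠ 0 := coeff_leadExp_ne_zero mo hw0
      set q := monomial (c - leadExp mo w)
        (MvPolynomial.coeff c f / MvPolynomial.coeff (leadExp mo w) w) * w with hq
      have hqJ : q ∈ J := Ideal.mul_mem_left _ _ hwJ
      have hqc : MvPolynomial.coeff c q = MvPolynomial.coeff c f := by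
        rw [hq, coeff_monomial_mul', if_pos tsub_le_self, tsub_tsub_cancel_of_le hwle,
          div_mul_cancel₀ _ hlc0]
      have hqsup : ∀ e ∈ q.support, mo.toSyn e ≤ mo.toSyn c := by
        intro e he
        rw [MvPolynomial.mem_support_iff, hq, coeff_monomial_mul'] at he
        split_ifs at he with hle'
        · have h1 : e - (c - leadExp mo w) ∈ w.support := by
            rw [MvPolynomial.mem_support_iff]
            intro h0
            rw [h0, mul_zero] at he
            exact he rfl
          calc mo.toSyn e
              = mo.toSyn ((c - leadExp mo w) + (e - (c - leadExp mo w))) := by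
                rw [add_tsub_cancel_of_le hle']
            _ = mo.toSyn (c - leadExp mo w) + mo.toSyn (e - (c - leadExp mo w)) := map_add _ _ _
            _ ≤ mo.toSyn (c - leadExp mo w) + mo.toSyn (leadExp mo w) :=
                add_le_add le_rfl (le_toSyn_leadExp mo h1)
            _ = mo.toSyn ((c - leadExp mo w) + leadExp mo w) := (map_add _ _ _).symm
            _ = mo.toSyn c := by rw [tsub_add_cancel_of_le hwle]
        · exact absurd rfl he
      set f' := f - q with hf'
      have hsupp' : ∀ e ∈ f'.support, e ∈ f.support ∨ e ∈ q.support := by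
        intro e he
        rw [MvPolynomial.mem_support_iff, hf', MvPolynomial.coeff_sub] at he
        by_contra hcon
        push_neg at hcon
        rw [MvPolynomial.notMem_support_iff.mp hcon.1,
          MvPolynomial.notMem_support_iff.mp hcon.2, sub_zero] at he
        exact he rfl
      have hc'0 : MvPolynomial.coeff c f' = 0 := by
        rw [hf', MvPolynomial.coeff_sub, hqc, sub_self]
      have hBlt : ∀ e ∈ B f', mo.toSyn e < mo.toSyn c := by
        intro e he
        have hesupp : e ∈ f'.support := (Finset.mem_filter.mp he).1
        have hein : monomial e (1 : K) ∈ inIdeal mo J := (Finset.mem_filter.mp he).2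
        have hene : e ≠ c := by
          intro h
          rw [h] at hesupp
          exact MvPolynomial.mem_support_iff.mp hesupp hc'0
        have hne' : mo.toSyn e ≠ mo.toSyn c := fun h => hene (mo.toSyn.injective h)
        rcases hsupp' e hesupp with h | h
        · have : e ∈ B f := Finset.mem_filter.mpr ⟨h, hein⟩
          exact lt_of_le_of_ne (hsup ▸ Finset.le_sup this) hne'
        · exact lt_of_le_of_ne (hqsup e h) hne'
      by_cases hBf' : B f' = ∅
      · refine ⟨f', by rw [hf']; simpa using hqJ, ?_, ?_⟩
        · intro e he hmem
          have : e ∈ B f' := Finset.mem_filter.mpr ⟨he, hmem⟩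
          rw [hBf'] at this
          exact absurd this (Finset.notMem_empty e)
        · intro e he
          rcases hsupp' e he with h | h
          · exact ⟨e, h, le_rfl⟩
          · exact ⟨c, hcsupp, hqsup e h⟩
      · obtain ⟨e₀, he₀, hsup'⟩ := Finset.exists_mem_eq_sup (B f')
          (Finset.nonempty_iff_ne_empty.mpr hBf') mo.toSyn
        have hlt : (B f').sup mo.toSyn < d :=
          lt_of_lt_of_le (hsup' ▸ hBlt e₀ he₀) (hsup ▸ hf)
        obtain ⟨r, hr1, hr2, hr3⟩ := IH _ hlt f' le_rfl
        refine ⟨r, ?_, hr2, ?_⟩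
        · have heq : f - r = q + (f' - r) := by rw [hf']; ring
          rw [heq]
          exact Ideal.add_mem _ hqJ hr1
        · intro cc hcc
          obtain ⟨e, he, hle⟩ := hr3 cc hcc
          rcases hsupp' e he with h | h
          · exact ⟨e, h, hle⟩
          · exact ⟨c, hcsupp, hle.trans (hqsup e h)⟩

end AuxLead

section AuxParts

open Finsupp

variable {A B : Type*}

lemma xPart_apply (c : (A ⊕ B) →₀ ℕ) (i : A) : xPart c i = c (Sum.inl i) := rfl

lemma yPart_apply (c : (A ⊕ B) →₀ ℕ) (jj : B) : yPart c jj = c (Sum.inr jj) := rfl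

lemma xPart_add (c d : (A ⊕ B) →₀ ℕ) : xPart (c + d) = xPart c + xPart d := by
  ext i; simp [xPart_apply]

lemma yPart_add (c d : (A ⊕ B) →₀ ℕ) : yPart (c + d) = yPart c + yPart d := by
  ext jj; simp [yPart_apply]

lemma xPart_mapDomain_inl (a : A →₀ ℕ) : xPart (Finsupp.mapDomain (Sum.inl : A → A ⊕ B) a) = a := by
  ext i; rw [xPart_apply, Finsupp.mapDomain_apply Sum.inl_injective]

lemma xPart_mapDomain_inr (b : B →₀ ℕ) : xPart (Finsupp.mapDomain (Sum.inr : B → A ⊕ B) b) = 0 := by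
  ext i
  rw [xPart_apply, Finsupp.mapDomain_notin_range]
  · rfl
  · rintro ⟨x, hx⟩; exact Sum.inr_ne_inl hx

lemma yPart_mapDomain_inr (b : B →₀ ℕ) : yPart (Finsupp.mapDomain (Sum.inr : B → A ⊕ B) b) = b := by
  ext jj; rw [yPart_apply, Finsupp.mapDomain_apply Sum.inr_injective]

lemma yPart_mapDomain_inl (a : A →₀ ℕ) : yPart (Finsupp.mapDomain (Sum.inl : A → A ⊕ B) a) = 0 := by
  ext jj
  rw [yPart_apply, Finsupp.mapDomain_notin_range]
  · rfl
  · rintro ⟨x, hx⟩; exact Sum.inl_ne_inr hx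

lemma xPart_single_inl [DecidableEq A] [DecidableEq B] (i : A) (k : ℕ) : xPart (Finsupp.single (Sum.inl i : A ⊕ B) k) = Finsupp.single i k := by
  ext i'
  rw [xPart_apply, Finsupp.single_apply, Finsupp.single_apply]
  by_cases h : i = i'
  · simp [h]
  · rw [if_neg h, if_neg (fun hh : Sum.inl i = Sum.inl i' => h (Sum.inl_injective hh))]

lemma yPart_single_inl [DecidableEq A] [DecidableEq B] (i : A) (k : ℕ) : yPart (Finsupp.single (Sum.inl i : A ⊕ B) k) = 0 := by
  ext jj
  rw [yPart_apply, Finsupp.single_apply, if_neg (fun hh : Sum.inl i = Sum.inr jj => Sum.inl_ne_inr hh)]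
  rfl

lemma xy_decomp (c : (A ⊕ B) →₀ ℕ) :
    Finsupp.mapDomain Sum.inl (xPart c) + Finsupp.mapDomain Sum.inr (yPart c) = c := by
  ext v
  rw [Finsupp.add_apply]
  cases v with
  | inl i =>
      rw [Finsupp.mapDomain_apply Sum.inl_injective,
        Finsupp.mapDomain_notin_range _ _ (by rintro ⟨x, hx⟩; exact Sum.inr_ne_inl hx),
        xPart_apply, add_zero]
  | inr jj =>
      rw [Finsupp.mapDomain_apply Sum.inr_injective,
        Finsupp.mapDomain_notin_range _ _ (by rintro ⟨x, hx⟩; exact Sum.inl_ne_inr hx),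
        yPart_apply, zero_add]

end AuxParts

section AuxHomog

open MvPolynomial

variable {σ : Type*} {K : Type} [Field K] {M : Type*} [AddCommMonoid M]

lemma exists_eq_mul_homogComponent {w : σ → M} {g : MvPolynomial σ K} {e : M}
    (hg : g.IsWeightedHomogeneous w e) (q : MvPolynomial σ K) (d : M) :
    ∃ q' : MvPolynomial σ K, weightedHomogeneousComponent w d (q * g) = q' * g := by
  classical
  refine ⟨∑ c ∈ q.support.filter (fun c => Finsupp.weight w c + e = d),
    monomial c (MvPolynomial.coeff c q), ?_⟩
  conv_lhs => rw [q.as_sum, Finset.sum_mul, map_sum]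
  rw [Finset.sum_mul, Finset.sum_filter]
  refine Finset.sum_congr rfl ?_
  intro c hc
  have hh : (monomial c (MvPolynomial.coeff c q) * g).IsWeightedHomogeneous w
      (Finsupp.weight w c + e) :=
    (isWeightedHomogeneous_monomial _ _ _ rfl).mul hg
  by_cases hd : Finsupp.weight w c + e = d
  · rw [if_pos hd, ← hd, hh.weightedHomogeneousComponent_same]
  · rw [if_neg hd, hh.weightedHomogeneousComponent_ne _
      (fun h => hd h.symm)]

lemma homogComponent_mem_span {w : σ → M} {Gs : Set (MvPolynomial σ K)}
    (hG : ∀ g ∈ Gs, ∃ e, g.IsWeightedHomogeneous w e) {p : MvPolynomial σ K}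
    (hp : p ∈ Ideal.span Gs) (d : M) :
    weightedHomogeneousComponent w d p ∈ Ideal.span Gs := by
  classical
  obtain ⟨co, hsupp, rfl⟩ := (Submodule.mem_span_set (R := MvPolynomial σ K)).mp hp
  rw [Finsupp.sum, map_sum]
  refine Submodule.sum_mem _ ?_
  intro g hg
  have hgG : g ∈ Gs := hsupp hg
  obtain ⟨e, he⟩ := hG g hgG
  obtain ⟨q', hq'⟩ := exists_eq_mul_homogComponent he (co g) d
  rw [smul_eq_mul, hq']
  exact Ideal.mul_mem_left _ _ (Ideal.subset_span hgG)

end AuxHomog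

namespace Paper

open Finsupp

open MvPolynomial

variable {K : Type} [Field K] {n m : ℕ}

lemma prod_mk_sum {ι : Type*} (s : Finset ι) (f g : ι → ℕ) :
    (∑ i ∈ s, ((f i, g i) : ℕ × ℕ)) = ((∑ i ∈ s, f i, ∑ i ∈ s, g i) : ℕ × ℕ) := by
  classical
  induction s using Finset.cons_induction with
  | empty => simp; rfl
  | cons a s ha ih => rw [Finset.sum_cons, Finset.sum_cons, Finset.sum_cons, ih, Prod.mk_add_mk]

/-- The bidegree weight on the variables of `T`. -/
noncomputable def wtP (dY : Fin m → ℕ) : Fin n ⊕ Fin m → ℕ × ℕ :=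
  Sum.elim (fun _ => (1, 0)) (fun jj => (dY jj, 1))

lemma weight_wtP (dY : Fin m → ℕ) (c : (Fin n ⊕ Fin m) →₀ ℕ) :
    Finsupp.weight (wtP (n := n) dY) c =
      (xdegT n m c + ∑ jj : Fin m, c (Sum.inr jj) * dY jj, ydegT n m c) := by
  rw [Finsupp.weight_apply, Finsupp.sum_fintype _ _ (fun v => by simp)]
  rw [Fintype.sum_sum_type]
  have h1 : ∀ i : Fin n, c (Sum.inl i) • wtP (n := n) dY (Sum.inl i)
      = ((c (Sum.inl i), 0) : ℕ × ℕ) := by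
    intro i
    simp [wtP, Prod.smul_mk]
  have h2 : ∀ jj : Fin m, c (Sum.inr jj) • wtP (n := n) dY (Sum.inr jj)
      = ((c (Sum.inr jj) * dY jj, c (Sum.inr jj)) : ℕ × ℕ) := by
    intro jj
    simp [wtP, Prod.smul_mk]
  rw [Finset.sum_congr rfl (fun i _ => h1 i), Finset.sum_congr rfl (fun jj _ => h2 jj),
    prod_mk_sum, prod_mk_sum, Prod.mk_add_mk]
  simp [xdegT, ydegT]

lemma iotaS_apply (f : S K n) : ιS K n m f = rename Sum.inl f := rfl

lemma smul_TT (f : S K n) (t : TT K n m) : f • t = ιS K n m f * t := by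
  rw [Algebra.smul_def]
  rfl

lemma ymon_def (c : Fin m →₀ ℕ) :
    ymon K n m c = monomial (Finsupp.mapDomain Sum.inr c) (1 : K) := rfl

lemma coeff_iota_mul_ymon (f : S K n) (c : Fin m →₀ ℕ) (a : Fin n →₀ ℕ) :
    MvPolynomial.coeff (Finsupp.mapDomain Sum.inl a + Finsupp.mapDomain Sum.inr c)
      (ιS K n m f * ymon K n m c) = MvPolynomial.coeff a f := by
  rw [ymon_def, MvPolynomial.coeff_mul_monomial', if_pos le_add_self, add_tsub_cancel_right,
    mul_one, iotaS_apply]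
  exact coeff_rename_mapDomain _ Sum.inl_injective f a

lemma support_iota_mul_ymon (f : S K n) (c : Fin m →₀ ℕ) {e : (Fin n ⊕ Fin m) →₀ ℕ}
    (he : e ∈ (ιS K n m f * ymon K n m c).support) :
    ∃ a ∈ f.support, e = Finsupp.mapDomain Sum.inl a + Finsupp.mapDomain Sum.inr c := by
  classical
  rw [MvPolynomial.mem_support_iff, ymon_def, MvPolynomial.coeff_mul_monomial'] at he
  split_ifs at he with hle
  · rw [mul_one] at he
    have h1 : e - Finsupp.mapDomain Sum.inr c ∈ (ιS K n m f).support :=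
      MvPolynomial.mem_support_iff.mpr he
    rw [iotaS_apply, MvPolynomial.support_rename_of_injective Sum.inl_injective] at h1
    obtain ⟨a, ha, haa⟩ := Finset.mem_image.mp h1
    refine ⟨a, ha, ?_⟩
    rw [haa]
    exact (tsub_add_cancel_of_le hle).symm
  · exact absurd rfl he

lemma leadExp_iota_mul_ymon {ord : MonomialOrder (Fin n ⊕ Fin m)}
    {ordY : MonomialOrder (Fin m)} {ordX : MonomialOrder (Fin n)}
    (hcomp : ComparesYFirst ord ordY ordX)
    {f : S K n} (hf : f ≠ 0) (c : Fin m →₀ ℕ) :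
    leadExp ord (ιS K n m f * ymon K n m c)
      = Finsupp.mapDomain Sum.inl (leadExp ordX f) + Finsupp.mapDomain Sum.inr c := by
  apply leadExp_eq_of
  · rw [coeff_iota_mul_ymon]
    exact coeff_leadExp_ne_zero ordX hf
  · intro e he
    obtain ⟨a, ha, rfl⟩ := support_iota_mul_ymon f c he
    by_contra hcon
    push_neg at hcon
    rcases (hcomp _ _).mp hcon with h | h
    · simp only [yPart_add, yPart_mapDomain_inl, yPart_mapDomain_inr, zero_add] at h
      exact lt_irrefl _ h
    · simp only [xPart_add, xPart_mapDomain_inl, xPart_mapDomain_inr, add_zero] at h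
      exact absurd h.2 (not_lt.mpr (le_toSyn_leadExp ordX ha))

lemma mem_span_ymon_yPart {P : Set (Fin m →₀ ℕ)} {u : TT K n m}
    (hu : u ∈ Submodule.span (S K n) ((fun cc => ymon K n m cc) '' P)) :
    ∀ c ∈ u.support, yPart c ∈ P := by
  classical
  induction hu using Submodule.span_induction with
  | mem x hx =>
      obtain ⟨cc, hcc, rfl⟩ := hx
      intro c hc
      simp only [ymon_def, MvPolynomial.mem_support_iff, MvPolynomial.coeff_monomial] at hc
      split_ifs at hc with h
      · rw [← h, yPart_mapDomain_inr]
        exact hcc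
      · exact absurd rfl hc
  | zero => intro c hc; simp at hc
  | add x y _ _ hx hy =>
      intro c hc
      rcases Finset.mem_union.mp (MvPolynomial.support_add hc) with h | h
      · exact hx c h
      · exact hy c h
  | smul a x _ hx =>
      intro c hc
      rw [smul_TT] at hc
      obtain ⟨c1, hc1, c2, hc2, hcc⟩ := Finset.mem_add.mp (MvPolynomial.support_mul _ _ hc)
      rw [iotaS_apply, MvPolynomial.support_rename_of_injective Sum.inl_injective] at hc1
      obtain ⟨a1, _, ha1⟩ := Finset.mem_image.mp hc1
      have : yPart c = yPart c2 := by
        rw [← hcc, yPart_add, ← ha1, yPart_mapDomain_inl, zero_add]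
      rw [this]
      exact hx c2 hc2


/-- In the setting of the x-condition theorem, let `h_1,…,h_s` correspond to
the standard monomials of `y`-degree `k`, sorted increasingly by `<'`. If the colon ideal
`I_j = (h_1,…,h_{j-1}) : h_j` is proper, then `in(I_j)` is generated by exactly those
variables `x_i` with `x_i h_j^* ∈ in_<(J)`. -/
theorem statement6 (K : Type) [Field K] (n m : ℕ)
    (dY : Fin m → ℕ) (J : Ideal (TT K n m))
    (ord : MonomialOrder (Fin n ⊕ Fin m))
    (ordY : MonomialOrder (Fin m)) (ordX : MonomialOrder (Fin n))
    (hcomp : ComparesYFirst ord ordY ordX)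
    (hbihom : IsBihomogIdeal K n m dY J)
    (hS : SInjectsModJ K n m J)
    (hx : XCondition ord J)
    (k : ℕ) (hk : 1 ≤ k)
    (s : ℕ) (H : Fin s → (Fin m →₀ ℕ))
    -- `H` enumerates the standard monomials of `y`-degree `k`, increasingly for `<'`
    (hdeg : ∀ j, ydeg m (H j) = k)
    (hstd : ∀ j, ymon K n m (H j) ∉ inIdeal ord J)
    (hall : ∀ c : Fin m →₀ ℕ, ydeg m c = k → ymon K n m c ∉ inIdeal ord J → ∃ j, H j = c)
    (hsort : ∀ j₁ j₂ : Fin s, j₁ < j₂ → ordY.toSyn (H j₁) < ordY.toSyn (H j₂))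
    (j : Fin s)
    (hproper :
      ((Submodule.span (S K n) ((fun j' => ymon K n m (H j')) '' {i | i < j}) ⊔
          (J : Submodule (TT K n m) (TT K n m)).restrictScalars (S K n)).colon
        (Submodule.span (S K n) {ymon K n m (H j)})) ≠ ⊤) :
    inIdeal ordX
      ((Submodule.span (S K n) ((fun j' => ymon K n m (H j')) '' {i | i < j}) ⊔
          (J : Submodule (TT K n m) (TT K n m)).restrictScalars (S K n)).colon
        (Submodule.span (S K n) {ymon K n m (H j)})) =
    Ideal.span {q : S K n | ∃ i : Fin n,
      (monomial (Finsupp.single (Sum.inl i) 1 + Finsupp.mapDomain Sum.inr (H j)) (1 : K)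
        ∈ inIdeal ord J) ∧ q = X i} := by
  classical
  obtain ⟨D, hD1, hD2⟩ := hx
  set N := Submodule.span (S K n) ((fun j' => ymon K n m (H j')) '' {i | i < j}) ⊔
      (J : Submodule (TT K n m) (TT K n m)).restrictScalars (S K n) with hN
  set Ij := N.colon (Submodule.span (S K n) {ymon K n m (H j)}) with hIjdef
  have hspanP : ∀ u ∈ Submodule.span (S K n) ((fun j' => ymon K n m (H j')) '' {i | i < j}),
      ∀ c ∈ u.support, ordY.toSyn (yPart c) < ordY.toSyn (H j) := by
    intro u hu c hc
    rw [show ((fun j' => ymon K n m (H j')) '' {i | i < j})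
        = (fun cc => ymon K n m cc) '' (H '' {i | i < j}) from (Set.image_image _ _ _).symm] at hu
    obtain ⟨j', hj'lt, hj'⟩ := mem_span_ymon_yPart hu c hc
    rw [← hj']
    exact hsort j' j hj'lt
  apply le_antisymm
  · -- forward inclusion
    rw [inIdeal, Ideal.span_le]
    rintro t ⟨f, ⟨hfI, hf0⟩, rfl⟩
    have hfh : ιS K n m f * ymon K n m (H j) ∈ N := by
      have h1 := Submodule.mem_colon.mp hfI (ymon K n m (H j))
        (Submodule.mem_span_singleton_self _)
      rwa [smul_TT] at h1
    set lf := leadExp ordX f with hlf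
    set c₀ := Finsupp.mapDomain Sum.inl lf + Finsupp.mapDomain Sum.inr (H j) with hc₀
    have hyc₀ : yPart c₀ = H j := by
      rw [hc₀, yPart_add, yPart_mapDomain_inl, yPart_mapDomain_inr, zero_add]
    have hc₀inl : ∀ i' : Fin n, c₀ (Sum.inl i') = lf i' := by
      intro i'
      rw [hc₀, Finsupp.add_apply, Finsupp.mapDomain_apply Sum.inl_injective,
        Finsupp.mapDomain_notin_range _ _ (by rintro ⟨x, hx⟩; exact Sum.inr_ne_inl hx), add_zero]
    have hc₀inr : ∀ j' : Fin m, c₀ (Sum.inr j') = H j j' := by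
      intro j'
      rw [hc₀, Finsupp.add_apply, Finsupp.mapDomain_apply Sum.inr_injective,
        Finsupp.mapDomain_notin_range _ _ (by rintro ⟨x, hx⟩; exact Sum.inl_ne_inr hx), zero_add]
    obtain ⟨u, hu, v, hv, huv⟩ := Submodule.mem_sup.mp hfh
    have hvJ : v ∈ J := hv
    have hveq : v = ιS K n m f * ymon K n m (H j) - u := by rw [← huv]; ring
    have hcoeffu : MvPolynomial.coeff c₀ u = 0 := by
      by_contra h
      have h2 := hspanP u hu c₀ (MvPolynomial.mem_support_iff.mpr h)
      rw [hyc₀] at h2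
      exact lt_irrefl _ h2
    have hcoeffp : MvPolynomial.coeff c₀ (ιS K n m f * ymon K n m (H j))
        = MvPolynomial.coeff lf f := by
      rw [hc₀]; exact coeff_iota_mul_ymon f (H j) lf
    have hvne : MvPolynomial.coeff c₀ v ≠ 0 := by
      rw [hveq, MvPolynomial.coeff_sub, hcoeffu, sub_zero, hcoeffp]
      exact coeff_leadExp_ne_zero ordX hf0
    have hlead : leadExp ord v = c₀ := by
      apply leadExp_eq_of ord hvne
      intro e he
      have hor : e ∈ (ιS K n m f * ymon K n m (H j)).support ∨ e ∈ u.support := by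
        rw [MvPolynomial.mem_support_iff, hveq, MvPolynomial.coeff_sub] at he
        by_contra hcon
        push_neg at hcon
        rw [MvPolynomial.notMem_support_iff.mp hcon.1,
          MvPolynomial.notMem_support_iff.mp hcon.2, sub_zero] at he
        exact he rfl
      rcases hor with h | h
      · have h2 := le_toSyn_leadExp ord h
        rwa [leadExp_iota_mul_ymon hcomp hf0, ← hc₀] at h2
      · refine le_of_lt ((hcomp e c₀).mpr (Or.inl ?_))
        rw [hyc₀]
        exact hspanP u hu e h
    have hmem : monomial c₀ (1 : K) ∈ inIdeal ord J :=
      (monomial_one_mem_inIdeal_iff ord).mpr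
        ⟨v, hvJ, fun h0 => hvne (by rw [h0, MvPolynomial.coeff_zero]), le_of_eq hlead⟩
    rw [hD2] at hmem
    obtain ⟨d, hdD, hdle⟩ := monomial_one_mem_span_iff.mp hmem
    rcases Nat.le_one_iff_eq_zero_or_eq_one.mp (hD1 d hdD) with h0 | h1
    · exfalso
      have hdinl : ∀ i' : Fin n, d (Sum.inl i') = 0 := fun i' =>
        Finset.sum_eq_zero_iff.mp h0 i' (Finset.mem_univ i')
      have hdle' : d ≤ Finsupp.mapDomain Sum.inr (H j) := by
        rw [Finsupp.le_def]
        intro v'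
        cases v' with
        | inl i' =>
            rw [hdinl i']
            exact Nat.zero_le _
        | inr j' =>
            have := Finsupp.le_def.mp hdle (Sum.inr j')
            rw [hc₀inr j'] at this
            rwa [Finsupp.mapDomain_apply Sum.inr_injective]
      apply hstd j
      rw [ymon_def, hD2]
      exact monomial_one_mem_span_iff.mpr ⟨d, hdD, hdle'⟩
    · have hex : ∃ i : Fin n, 1 ≤ d (Sum.inl i) := by
        by_contra hcon
        push_neg at hcon
        have hzz : ∀ i ∈ Finset.univ, d (Sum.inl i) = 0 := fun i _ => Nat.lt_one_iff.mp (hcon i)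
        rw [Finset.sum_congr rfl hzz, Finset.sum_const_zero] at h1
        exact one_ne_zero h1.symm
      obtain ⟨i, hi⟩ := hex
      have hsplit : d (Sum.inl i) + ∑ x ∈ Finset.univ.erase i, d (Sum.inl x)
          = ∑ x : Fin n, d (Sum.inl x) :=
        Finset.add_sum_erase Finset.univ (fun i => d (Sum.inl i)) (Finset.mem_univ i)
      have hdi : d (Sum.inl i) = 1 := by omega
      have hzero : ∑ x ∈ Finset.univ.erase i, d (Sum.inl x) = 0 := by omega
      have hrest : ∀ i' : Fin n, i' ≠ i → d (Sum.inl i') = 0 := fun i' hne =>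
        Finset.sum_eq_zero_iff.mp hzero i' (Finset.mem_erase.mpr ⟨hne, Finset.mem_univ i'⟩)
      have hin : monomial (Finsupp.single (Sum.inl i) 1 + Finsupp.mapDomain Sum.inr (H j)) (1 : K)
          ∈ inIdeal ord J := by
        rw [hD2]
        refine monomial_one_mem_span_iff.mpr ⟨d, hdD, ?_⟩
        rw [Finsupp.le_def]
        intro v'
        cases v' with
        | inl i' =>
            rw [Finsupp.add_apply, Finsupp.single_apply,
              Finsupp.mapDomain_notin_range _ _ (by rintro ⟨x, hx⟩; exact Sum.inr_ne_inl hx),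
              add_zero]
            by_cases hii : i' = i
            · subst hii
              rw [if_pos rfl, hdi]
            · rw [if_neg (fun hh => hii (Sum.inl_injective hh).symm), hrest i' hii]
        | inr j' =>
            have h3 := Finsupp.le_def.mp hdle (Sum.inr j')
            rw [hc₀inr j'] at h3
            rw [Finsupp.add_apply, Finsupp.single_apply,
              if_neg (fun hh : Sum.inl i = Sum.inr j' => Sum.inl_ne_inr hh),
              Finsupp.mapDomain_apply Sum.inr_injective, zero_add]
            exact h3
      have hXiRHS : (X i : S K n) ∈ {q : S K n | ∃ i : Fin n,
          (monomial (Finsupp.single (Sum.inl i) 1 + Finsupp.mapDomain Sum.inr (H j)) (1 : K)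
            ∈ inIdeal ord J) ∧ q = X i} := ⟨i, hin, rfl⟩
      have hilf : 1 ≤ lf i := by
        have h4 := Finsupp.le_def.mp hdle (Sum.inl i)
        rw [hc₀inl i, hdi] at h4
        exact h4
      have hfact : (monomial lf (1 : K) : S K n)
          = monomial (lf - Finsupp.single i 1) (1 : K) * X i := by
        rw [show (X i : S K n) = monomial (Finsupp.single i 1) (1 : K) from rfl, monomial_mul,
          one_mul, tsub_add_cancel_of_le (Finsupp.single_le_iff.mpr hilf)]
      show (monomial (leadExp ordX f) (1 : K) : S K n) ∈ _
      rw [← hlf, hfact]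
      exact Ideal.mul_mem_left _ _ (Ideal.subset_span hXiRHS)
  · -- reverse inclusion
    rw [Ideal.span_le]
    rintro t ⟨i, hin, rfl⟩
    set c₁ := Finsupp.single (Sum.inl i : Fin n ⊕ Fin m) 1 + Finsupp.mapDomain Sum.inr (H j)
      with hc₁
    set p : TT K n m := monomial c₁ (1 : K) with hpdef
    have hyPc₁ : yPart c₁ = H j := by
      rw [hc₁, yPart_add, yPart_single_inl, yPart_mapDomain_inr, zero_add]
    have hxPc₁ : xPart c₁ = Finsupp.single i 1 := by
      rw [hc₁, xPart_add, xPart_single_inl, xPart_mapDomain_inr, add_zero]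
    obtain ⟨r, hrJ, hrstd, hrdom⟩ := exists_reduction ord J p
    have hpsupp : p.support = {c₁} := by
      rw [hpdef, support_monomial, if_neg (one_ne_zero (α := K))]
    have hstrict : ∀ c ∈ r.support, ord.toSyn c < ord.toSyn c₁ := by
      intro c hc
      obtain ⟨c', hc', hle⟩ := hrdom c hc
      rw [hpsupp, Finset.mem_singleton] at hc'
      subst hc'
      refine lt_of_le_of_ne hle (fun h => ?_)
      exact hrstd c hc (by rw [ord.toSyn.injective h]; exact hin)
    obtain ⟨Gs, hGs, hJGs⟩ := hbihom
    have hGhom : ∀ g ∈ Gs, ∃ e, g.IsWeightedHomogeneous (wtP (n := n) dY) e := by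
      intro g hg
      obtain ⟨a, b, hab⟩ := hGs g hg
      refine ⟨(a, b), fun dd hdd => ?_⟩
      rw [weight_wtP]
      obtain ⟨ha1, ha2⟩ := hab dd (MvPolynomial.mem_support_iff.mpr hdd)
      rw [ha1, ha2]
    set D₀ := Finsupp.weight (wtP (n := n) dY) c₁ with hD₀
    set ρ := weightedHomogeneousComponent (wtP (n := n) dY) D₀ r with hρdef
    have hphom : p.IsWeightedHomogeneous (wtP (n := n) dY) D₀ := by
      rw [hpdef]
      exact isWeightedHomogeneous_monomial _ _ _ rfl
    have hpρJ : p - ρ ∈ J := by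
      have h1 : p - r ∈ Ideal.span Gs := by rw [← hJGs]; exact hrJ
      have h2 := homogComponent_mem_span hGhom h1 D₀
      rw [map_sub, hphom.weightedHomogeneousComponent_same] at h2
      rw [hJGs]
      exact h2
    have hρsupp : ∀ c ∈ ρ.support, c ∈ r.support ∧ Finsupp.weight (wtP (n := n) dY) c = D₀ := by
      intro c hc
      rw [MvPolynomial.mem_support_iff, hρdef, coeff_weightedHomogeneousComponent] at hc
      split_ifs at hc with h
      · exact ⟨MvPolynomial.mem_support_iff.mpr hc, h⟩
      · exact absurd rfl hc
    have hydegc₁ : ydegT n m c₁ = k := by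
      rw [← hdeg j, ydegT, ydeg]
      refine Finset.sum_congr rfl (fun j' _ => ?_)
      rw [hc₁, Finsupp.add_apply, Finsupp.single_apply,
        if_neg (fun hh : Sum.inl i = Sum.inr j' => Sum.inl_ne_inr hh),
        Finsupp.mapDomain_apply Sum.inr_injective, zero_add]
    have hydeg_eq : ∀ c : (Fin n ⊕ Fin m) →₀ ℕ, ydeg m (yPart c) = ydegT n m c := fun c => rfl
    have hyk : ∀ c ∈ ρ.support, ydeg m (yPart c) = k := by
      intro c hc
      have h2 := congrArg Prod.snd ((hρsupp c hc).2)
      rw [hD₀, weight_wtP, weight_wtP] at h2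
      rw [hydeg_eq c]
      simpa [hydegc₁] using h2
    have hstdY : ∀ c ∈ ρ.support, ∃ j', H j' = yPart c := by
      intro c hc
      apply hall (yPart c) (hyk c hc)
      intro hmem
      apply hrstd c (hρsupp c hc).1
      refine monomial_one_mem_inIdeal_mono ord (a := Finsupp.mapDomain Sum.inr (yPart c)) ?_ hmem
      conv_rhs => rw [← xy_decomp c]
      exact le_add_self
    have hylt : ∀ c ∈ ρ.support, yPart c ≠ H j →
        ordY.toSyn (yPart c) < ordY.toSyn (H j) := by
      intro c hc hcy
      rcases (hcomp c c₁).mp (hstrict c (hρsupp c hc).1) with h | h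
      · rwa [hyPc₁] at h
      · exact absurd (h.1.trans hyPc₁) hcy
    set g : S K n := ∑ c ∈ ρ.support.filter (fun c => yPart c = H j),
        monomial (xPart c) (MvPolynomial.coeff c ρ) with hgdef
    set r₁ : TT K n m := ∑ c ∈ ρ.support.filter (fun c => ¬ yPart c = H j),
        monomial c (MvPolynomial.coeff c ρ) with hr₁def
    have hkey : ιS K n m g * ymon K n m (H j) =
        ∑ c ∈ ρ.support.filter (fun c => yPart c = H j),
          monomial c (MvPolynomial.coeff c ρ) := by
      rw [hgdef, map_sum, Finset.sum_mul]
      refine Finset.sum_congr rfl (fun c hc => ?_)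
      have hy : yPart c = H j := (Finset.mem_filter.mp hc).2
      rw [iotaS_apply, rename_monomial, ymon_def, monomial_mul, mul_one, ← hy, xy_decomp]
    have hsplit : r₁ + ιS K n m g * ymon K n m (H j) = ρ := by
      rw [hkey, hr₁def, Finset.sum_filter_not_add_sum_filter]
      exact (ρ.as_sum).symm
    have hr₁span : r₁ ∈ Submodule.span (S K n)
        ((fun j' => ymon K n m (H j')) '' {i | i < j}) := by
      rw [hr₁def]
      refine Submodule.sum_mem _ (fun c hc => ?_)
      obtain ⟨hcρ, hcy⟩ := Finset.mem_filter.mp hc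
      obtain ⟨j', hj'⟩ := hstdY c hcρ
      have hlt : ordY.toSyn (yPart c) < ordY.toSyn (H j) := hylt c hcρ hcy
      have hj'lt : j' < j := by
        by_contra hcon
        push_neg at hcon
        rcases eq_or_lt_of_le hcon with h | h
        · rw [← hj', ← h] at hlt
          exact lt_irrefl _ hlt
        · rw [← hj'] at hlt
          exact absurd (hsort j j' h) (not_lt.mpr (le_of_lt hlt))
      have heq : (monomial c (MvPolynomial.coeff c ρ) : TT K n m)
          = (monomial (xPart c) (MvPolynomial.coeff c ρ) : S K n) • ymon K n m (H j') := by
        rw [smul_TT, iotaS_apply, rename_monomial, ymon_def, monomial_mul, mul_one, hj',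
          xy_decomp]
      rw [heq]
      exact Submodule.smul_mem _ _ (Submodule.subset_span ⟨j', hj'lt, rfl⟩)
    have hgsup : ∀ b ∈ g.support, ordX.toSyn b < ordX.toSyn (Finsupp.single i 1) := by
      intro b hb
      rw [MvPolynomial.mem_support_iff, hgdef, MvPolynomial.coeff_sum] at hb
      obtain ⟨c, hc, hcne⟩ := Finset.exists_ne_zero_of_sum_ne_zero hb
      obtain ⟨hcρ, hcy⟩ := Finset.mem_filter.mp hc
      rw [MvPolynomial.coeff_monomial] at hcne
      split_ifs at hcne with hbc
      · have hxlt : ordX.toSyn (xPart c) < ordX.toSyn (xPart c₁) := by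
          rcases (hcomp c c₁).mp (hstrict c (hρsupp c hcρ).1) with h | h
          · rw [hcy, hyPc₁] at h
            exact absurd h (lt_irrefl _)
          · exact h.2
        rw [← hbc, ← hxPc₁]
        exact hxlt
      · exact absurd rfl hcne
    set f₀ : S K n := X i - g with hf₀def
    have hgcoeff : MvPolynomial.coeff (Finsupp.single i 1) g = 0 := by
      by_contra h
      exact lt_irrefl _ (hgsup _ (MvPolynomial.mem_support_iff.mpr h))
    have hf₀coeff : MvPolynomial.coeff (Finsupp.single i 1) f₀ = 1 := by
      rw [hf₀def, MvPolynomial.coeff_sub, hgcoeff, sub_zero, MvPolynomial.coeff_X, if_pos rfl]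
    have hf₀ne : f₀ ≠ 0 := by
      intro h
      rw [h, MvPolynomial.coeff_zero] at hf₀coeff
      exact one_ne_zero hf₀coeff.symm
    have hf₀lead : leadExp ordX f₀ = Finsupp.single i 1 := by
      apply leadExp_eq_of ordX (by rw [hf₀coeff]; exact one_ne_zero)
      intro e he
      rw [MvPolynomial.mem_support_iff, hf₀def, MvPolynomial.coeff_sub] at he
      by_cases hXe : MvPolynomial.coeff e (X i : S K n) = 0
      · rw [hXe, zero_sub, neg_ne_zero] at he
        exact le_of_lt (hgsup e (MvPolynomial.mem_support_iff.mpr he))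
      · have heq : e = Finsupp.single i 1 := by
          rw [show (X i : S K n) = monomial (Finsupp.single i 1) (1 : K) from rfl,
            MvPolynomial.coeff_monomial] at hXe
          split_ifs at hXe with h
          · exact h.symm
          · exact absurd rfl hXe
        rw [heq]
    have hf₀mul : ιS K n m f₀ * ymon K n m (H j) = (p - ρ) + r₁ := by
      rw [hf₀def, map_sub, sub_mul]
      have h1 : ιS K n m (X i) * ymon K n m (H j) = p := by
        rw [iotaS_apply, rename_X, ymon_def, hpdef, hc₁,
          show (X (Sum.inl i) : TT K n m) = monomial (Finsupp.single (Sum.inl i) 1) (1 : K)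
            from rfl, monomial_mul, one_mul]
      rw [h1, show ιS K n m g * ymon K n m (H j) = ρ - r₁ from by rw [← hsplit]; ring]
      ring
    have hf₀Ij : f₀ ∈ Ij := by
      rw [hIjdef]
      rw [Submodule.mem_colon]
      intro pp hpp
      obtain ⟨a, rfl⟩ := Submodule.mem_span_singleton.mp hpp
      rw [smul_smul, mul_comm, ← smul_smul]
      refine Submodule.smul_mem _ _ ?_
      rw [smul_TT, hf₀mul]
      refine Submodule.add_mem _ ?_ (Submodule.mem_sup_left hr₁span)
      exact Submodule.mem_sup_right hpρJ
    rw [inIdeal]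
    apply Ideal.subset_span
    refine ⟨f₀, ⟨hf₀Ij, hf₀ne⟩, ?_⟩
    show (monomial (leadExp ordX f₀) (1 : K) : S K n) = X i
    rw [hf₀lead]
    rfl


end Paper
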